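/- Let D be a reduced effective divisor on P¹ over F_q, k ≥ 0 an integer, and 𝒟 ⊆ F_k a D-marking. Then there is a nonnegative integer h with h ≤ (deg D + k)/2 such that there exists a nonzero section s ∈ H⁰(F_k, O(1,h)) vanishing at every point of 𝒟. -/

import Mathlib

/-!
Statement 11.  For every `D`-marking `𝒟` of the Hirzebruch surface `F_k` over `F_q`
there is a nonnegative integer `h ≤ (deg D + k)/2` and a nonzero section of
`O(1, h)` vanishing at every point of `𝒟`.

A `D`-marking is the choice, for each closed point `P ∈ D`, of a relative degree
one point of the fiber `P¹` over `P`; such a point is either `(z : 1)` with `z` in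
the residue field of `P`, or `(1 : 0)`.  We encode a marking as a function
assigning to each closed point `P` an element of `Option (Res P)` (with `none`
standing for `(1 : 0)`); only the values at points of `D` are used.
-/
open scoped Classical

noncomputable section

namespace Stmt11

/-- Closed points of the projective line `P¹` over `F_q`: `none` is the point at
infinity, and `some p` corresponds to the monic irreducible polynomial `p`. -/
abbrev P1Pt (Fq : Type) [Field Fq] : Type :=
  Option {p : Polynomial Fq // p.Monic ∧ Irreducible p}

variable {Fq : Type} [Field Fq]

/-- The degree of a closed point of `P¹`. -/
def P1Pt.deg : P1Pt Fq → ℕ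
  | none => 1
  | some p => p.1.natDegree

/-- The residue field of a closed point of `P¹`. -/
def P1Pt.Res : P1Pt Fq → Type
  | none => Fq
  | some p => AdjoinRoot p.1

instance (P : P1Pt Fq) : CommRing (P1Pt.Res P) :=
  match P with
  | none => inferInstanceAs (CommRing Fq)
  | some p => inferInstanceAs (CommRing (AdjoinRoot p.1))

instance (P : P1Pt Fq) : Algebra Fq (P1Pt.Res P) :=
  match P with
  | none => Algebra.id Fq
  | some p => inferInstanceAs (Algebra Fq (AdjoinRoot p.1))

/-- The homogeneous coordinates `(t₀ : t₁)` of a closed point of `P¹`, in its residue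
field: `(1 : 0)` for the point at infinity, and `(θ : 1)` with `θ` the root of `p`
for the point `some p`. -/
def P1Pt.coords : (P : P1Pt Fq) → Fin 2 → P1Pt.Res P
  | none => ![1, 0]
  | some p => ![AdjoinRoot.root p.1, 1]

/-- Evaluate a polynomial in the homogeneous coordinates `t₀, t₁` of the base `P¹`
at a closed point `P`, in the residue field of `P`. -/
def resEval (P : P1Pt Fq) (A : MvPolynomial (Fin 2) Fq) : P1Pt.Res P :=
  MvPolynomial.aeval (P1Pt.coords P) A

/-- `r_P(s)`: the number of relative degree one points of the fiber of `F_k → P¹`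
over `P` at which the binary cubic form `s = (A₀, A₁, A₂, A₃)` vanishes.  These
points are the `(z : 1)` with `z` in the residue field of `P`, together with `(1 : 0)`. -/
def rP (P : P1Pt Fq) (s : Fin 4 → MvPolynomial (Fin 2) Fq) : ℕ :=
  Nat.card {z : P1Pt.Res P //
      resEval P (s 0) * z ^ 3 + resEval P (s 1) * z ^ 2
        + resEval P (s 2) * z + resEval P (s 3) = 0} +
    (if resEval P (s 0) = 0 then 1 else 0)

/-- The degree of a reduced effective divisor (a finite set of closed points) on `P¹`. -/
def degD (D : Finset (P1Pt Fq)) : ℕ := ∑ P ∈ D, P1Pt.deg P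

/-- `r_D(s) = ∏_{P ∣ D} r_P(s)`. -/
def rD (D : Finset (P1Pt Fq)) (s : Fin 4 → MvPolynomial (Fin 2) Fq) : ℕ :=
  ∏ P ∈ D, rP P s

/-- `a_D(s) = ∏_{P ∣ D} (r_P(s) − 1)`. -/
def aD (D : Finset (P1Pt Fq)) (s : Fin 4 → MvPolynomial (Fin 2) Fq) : ℤ :=
  ∏ P ∈ D, ((rP P s : ℤ) - 1)

/-- `p` is homogeneous of (possibly negative) degree `d`; for `d < 0` this forces
`p = 0`. -/
def IsHomOfDeg (p : MvPolynomial (Fin 2) Fq) (d : ℤ) : Prop :=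
  p.IsHomogeneous d.toNat ∧ (d < 0 → p = 0)

/-- The space of global sections of `O(m, ℓ)` on the Hirzebruch surface `F_k`,
viewed as tuples `(A₀, …, A_m)` of binary forms with `A_i` homogeneous of degree
`ℓ − i·k`. -/
def SecSet (m ℓ k : ℕ) : Set (Fin (m + 1) → MvPolynomial (Fin 2) Fq) :=
  {s | ∀ i : Fin (m + 1), IsHomOfDeg (s i) ((ℓ : ℤ) - (i : ℕ) * k)}

/-- A binary cubic form `s ∈ H⁰(F_k, O(3,ℓ))` is horizontally reducible iff it is
zero or factors as a product of a nonzero quadratic and a nonzero linear form in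
`x, y` with homogeneous polynomial coefficients. -/
def HorizRed (k : ℕ) (s : Fin 4 → MvPolynomial (Fin 2) Fq) : Prop :=
  s = 0 ∨ ∃ (b c : ℤ) (B : Fin 3 → MvPolynomial (Fin 2) Fq)
      (C : Fin 2 → MvPolynomial (Fin 2) Fq),
    B ≠ 0 ∧ C ≠ 0 ∧
    (∀ j : Fin 3, IsHomOfDeg (B j) (b - (j : ℕ) * k)) ∧
    (∀ j : Fin 2, IsHomOfDeg (C j) (c - (j : ℕ) * k)) ∧
    s 0 = B 0 * C 0 ∧ s 1 = B 0 * C 1 + B 1 * C 0 ∧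
    s 2 = B 1 * C 1 + B 2 * C 0 ∧ s 3 = B 2 * C 1

/-- The value (in a fixed trivialization) of a section `(C₀, C₁)` of `O(1, h)` at
the point of the fiber over `P` marked by `pt`: at `(z : 1)` it is `C₀(P)·z + C₁(P)`,
and at `(1 : 0)` it is `C₀(P)`. -/
def evalAt1 (P : P1Pt Fq) (pt : Option (P1Pt.Res P))
    (s : Fin 2 → MvPolynomial (Fin 2) Fq) : P1Pt.Res P :=
  match pt with
  | some z => resEval P (s 0) * z + resEval P (s 1)
  | none => resEval P (s 0)


-- auxiliary
lemma degree_pair (i j : ℕ) :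
    Finsupp.degree (Finsupp.single (0 : Fin 2) i + Finsupp.single 1 j) = i + j := by
  rw [Finsupp.degree_eq_weight_one]
  simp [map_add, Finsupp.weight_apply, Finsupp.sum_single_index]

def binPoly (n : ℕ) (c : Fin n → Fq) : MvPolynomial (Fin 2) Fq :=
  ∑ i : Fin n, MvPolynomial.monomial
    (Finsupp.single 0 (i : ℕ) + Finsupp.single 1 (n - 1 - (i : ℕ))) (c i)

lemma binPoly_zero_n (c : Fin 0 → Fq) : binPoly 0 c = 0 := by
  simp [binPoly]

lemma binPoly_sub (n : ℕ) (c c' : Fin n → Fq) :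
    binPoly n (c - c') = binPoly n c - binPoly n c' := by
  simp [binPoly, Finset.sum_sub_distrib, Pi.sub_apply, map_sub]

lemma binPoly_hom (n : ℕ) (hn : 1 ≤ n) (c : Fin n → Fq) :
    (binPoly n c).IsHomogeneous (n - 1) := by
  apply MvPolynomial.IsHomogeneous.sum
  intro i _
  apply MvPolynomial.isHomogeneous_monomial
  have hi : (i : ℕ) < n := i.isLt
  rw [degree_pair]
  omega

lemma binPoly_eq_zero (n : ℕ) (hn : n = 0) (c : Fin n → Fq) : binPoly n c = 0 := by
  subst hn; simp [binPoly]

lemma binPoly_inj (n : ℕ) (c : Fin n → Fq) (h : binPoly n c = 0) : c = 0 := by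
  funext i
  have := congrArg (MvPolynomial.coeff
    (Finsupp.single 0 (i : ℕ) + Finsupp.single 1 (n - 1 - (i : ℕ)))) h
  rw [binPoly, MvPolynomial.coeff_sum] at this
  simp only [MvPolynomial.coeff_monomial, MvPolynomial.coeff_zero] at this
  rw [Finset.sum_eq_single i] at this
  · simpa using this
  · intro j _ hj
    rw [if_neg]
    intro hEq
    apply hj
    have h0 := DFunLike.congr_fun hEq 0
    simp [Finsupp.single_apply] at h0
    exact Fin.ext h0
  · simp

instance adjFintype [Fintype Fq] (p : {p : Polynomial Fq // p.Monic ∧ Irreducible p}) :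
    Fintype (AdjoinRoot p.1) :=
  Module.fintypeOfFintype (AdjoinRoot.powerBasisAux' p.2.1)

instance resFintype [Fintype Fq] (P : P1Pt Fq) : Fintype (P1Pt.Res P) :=
  match P with
  | none => inferInstanceAs (Fintype Fq)
  | some p => inferInstanceAs (Fintype (AdjoinRoot p.1))

lemma card_res [Fintype Fq] (P : P1Pt Fq) :
    Fintype.card (P1Pt.Res P) = Fintype.card Fq ^ P1Pt.deg P := by
  match P with
  | none => simp [P1Pt.Res, P1Pt.deg]; rfl
  | some p =>
      show Fintype.card (AdjoinRoot p.1) = Fintype.card Fq ^ p.1.natDegree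
      rw [Module.card_fintype (AdjoinRoot.powerBasisAux' p.2.1), Fintype.card_fin]

lemma isHom_of_nonneg {p : MvPolynomial (Fin 2) Fq} {d : ℤ} (hd : 0 ≤ d)
    (hp : p.IsHomogeneous d.toNat) : IsHomOfDeg p d :=
  ⟨hp, fun h => absurd h (not_lt.2 hd)⟩

lemma isHom_zero (d : ℤ) : IsHomOfDeg (0 : MvPolynomial (Fin 2) Fq) d :=
  ⟨MvPolynomial.isHomogeneous_zero _ _ _, fun _ => rfl⟩

/-- Let `D` be a reduced effective divisor on `P¹`, `k ≥ 0`, and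
`𝒟 ⊆ F_k` a `D`-marking.  Then there is `h ≥ 0` with `h ≤ (deg D + k)/2` and a
nonzero section `s ∈ H⁰(F_k, O(1,h))` vanishing at every point of `𝒟`. -/
theorem statement_11 (Fq : Type) [Field Fq] [Fintype Fq] (k : ℕ)
    (D : Finset (P1Pt Fq)) (pt : (P : P1Pt Fq) → Option (P1Pt.Res P)) :
    ∃ h : ℕ, 2 * h ≤ degD D + k ∧
      ∃ s ∈ SecSet 1 h k, s ≠ (0 : Fin 2 → MvPolynomial (Fin 2) Fq) ∧
        ∀ P ∈ D, evalAt1 P (pt P) s = 0 := by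
  set n := degD D with hn
  set h := (n + k) / 2 with hh
  set m := h + 1 - k with hm
  have h2 := Nat.div_add_mod (n + k) 2
  have h1 : (n + k) % 2 < 2 := Nat.mod_lt _ (by norm_num)
  refine ⟨h, by omega, ?_⟩
  have hq : 2 ≤ Fintype.card Fq := Fintype.one_lt_card
  have hdim : n < h + 1 + m := by omega
  let Φ : ((Fin (h + 1) → Fq) × (Fin m → Fq)) → (∀ P : D, P1Pt.Res P.1) :=
    fun c P => evalAt1 P.1 (pt P.1) ![binPoly (h + 1) c.1, binPoly m c.2]
  have hcard : Fintype.card (∀ P : D, P1Pt.Res P.1)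
      < Fintype.card ((Fin (h + 1) → Fq) × (Fin m → Fq)) := by
    rw [Fintype.card_pi, Fintype.card_prod, Fintype.card_fun, Fintype.card_fun]
    calc (∏ P : D, Fintype.card (P1Pt.Res P.1))
        = ∏ P ∈ D, Fintype.card (P1Pt.Res P) :=
          Finset.prod_coe_sort D (fun P => Fintype.card (P1Pt.Res P))
      _ = ∏ P ∈ D, Fintype.card Fq ^ P1Pt.deg P :=
          Finset.prod_congr rfl fun P _ => card_res P
      _ = Fintype.card Fq ^ n := Finset.prod_pow_eq_pow_sum _ _ _
      _ < Fintype.card Fq ^ (h + 1 + m) := Nat.pow_lt_pow_right (by omega) hdim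
      _ = _ := by rw [pow_add, Fintype.card_fin, Fintype.card_fin]
  obtain ⟨c, c', hne, heq⟩ := Fintype.exists_ne_map_eq_of_card_lt Φ hcard
  refine ⟨![binPoly (h + 1) (c.1 - c'.1), binPoly m (c.2 - c'.2)], ?_, ?_, ?_⟩
  · intro i
    rcases i with ⟨iv, hiv⟩
    interval_cases iv
    · show IsHomOfDeg (binPoly (h + 1) (c.1 - c'.1)) ((h : ℤ) - ((0 : ℕ) : ℤ) * k)
      refine ⟨?_, ?_⟩
      · have hp := binPoly_hom (h + 1) (by omega) (c.1 - c'.1)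
        have e : h + 1 - 1 = ((h : ℤ) - ((0 : ℕ) : ℤ) * k).toNat := by
          push_cast; omega
        rw [← e]; exact hp
      · intro hlt; exfalso; push_cast at hlt; omega
    · show IsHomOfDeg (binPoly m (c.2 - c'.2)) ((h : ℤ) - ((1 : ℕ) : ℤ) * k)
      by_cases hk : k ≤ h
      · refine ⟨?_, ?_⟩
        · have hp := binPoly_hom m (by omega) (c.2 - c'.2)
          have e : m - 1 = ((h : ℤ) - ((1 : ℕ) : ℤ) * k).toNat := by
            push_cast; omega
          rw [← e]; exact hp
        · intro hlt; exfalso; push_cast at hlt; omega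
      · rw [binPoly_eq_zero m (by omega) _]
        exact isHom_zero _
  · intro h0
    apply hne
    have h1' : binPoly (h + 1) (c.1 - c'.1) = 0 := by
      have := congrFun h0 0; simpa using this
    have h2' : binPoly m (c.2 - c'.2) = 0 := by
      have := congrFun h0 1; simpa using this
    have e1 : c.1 - c'.1 = 0 := binPoly_inj _ _ h1'
    have e2 : c.2 - c'.2 = 0 := binPoly_inj _ _ h2'
    rw [sub_eq_zero] at e1 e2
    exact Prod.ext e1 e2
  · intro P hP
    have hphi : Φ c ⟨P, hP⟩ = Φ c' ⟨P, hP⟩ := congrFun heq ⟨P, hP⟩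
    simp only [Φ] at hphi
    rw [binPoly_sub, binPoly_sub]
    cases hpt : pt P with
    | none =>
        rw [hpt] at hphi
        simp only [evalAt1, Matrix.cons_val_zero, resEval, map_sub] at hphi ⊢
        rw [sub_eq_zero]
        exact hphi
    | some z =>
        rw [hpt] at hphi
        simp only [evalAt1, Matrix.cons_val_zero, Matrix.cons_val_one,
          Matrix.head_cons, resEval, map_sub] at hphi ⊢
        linear_combination hphi


end Stmt11
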